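/- Let (M,φ,g) be a 2k-dimensional anti-paraKähler manifold and (TM,g_BS) its tangent bundle with the Berger type deformed Sasaki metric. A vector field ξ on M is parallel (∇ξ = 0) if and only if the map ξ : (M,g) → (TM,g_BS) is a minimal isometric immersion. -/

import Mathlib

/-!
A local-coordinate formalization (in a global chart `ℝⁿ`, `n = 2k`) of the
geometry of the tangent bundle of an anti-paraKähler manifold `(M, φ, g)`
endowed with the Berger type deformed Sasaki metric `g_BS`.
-/

open scoped BigOperators
open Matrix

namespace BergerSasaki

variable {n : ℕ}

/-- Partial derivative `∂/∂xⁱ` of a real function on the chart `ℝⁿ`. -/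
noncomputable def pd (i : Fin n) (f : (Fin n → ℝ) → ℝ) (x : Fin n → ℝ) : ℝ :=
  fderiv ℝ f x (Pi.single i 1)

/-- The local data of an almost anti-paraHermitian manifold in a global chart `ℝⁿ`:
a Riemannian metric `g` and an almost paracomplex structure `phi` (`phi ∘ phi = id`;
the two eigenbundles for the eigenvalues `±1` have the same rank, i.e. `phi` is
trace free), such that `g(phi X, phi Y) = g(X , Y)`. -/
structure PreData (n : ℕ) where
  g : (Fin n → ℝ) → Matrix (Fin n) (Fin n) ℝ
  phi : (Fin n → ℝ) → Matrix (Fin n) (Fin n) ℝ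
  g_smooth : ∀ i j, ContDiff ℝ (⊤ : ℕ∞) fun x => g x i j
  phi_smooth : ∀ i j, ContDiff ℝ (⊤ : ℕ∞) fun x => phi x i j
  g_symm : ∀ x, (g x).IsSymm
  g_posdef : ∀ x, (g x).PosDef
  phi_sq : ∀ x, phi x * phi x = 1
  phi_trace : ∀ x, (phi x).trace = 0
  compat : ∀ x, (phi x)ᵀ * g x * phi x = g x

/-- Christoffel symbols `Γ^h_{ij}` of the Levi-Civita connection `∇` of `D.g`. -/
noncomputable def Gamma (D : PreData n) (x : Fin n → ℝ) (i j h : Fin n) : ℝ :=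
  (1 / 2) * ∑ l, (D.g x)⁻¹ h l *
    (pd i (fun y => D.g y j l) x + pd j (fun y => D.g y i l) x - pd l (fun y => D.g y i j) x)

/-- Local components `R_{ijl}{}^h` of the Riemann curvature tensor of `∇`. -/
noncomputable def Riem (D : PreData n) (x : Fin n → ℝ) (i j l h : Fin n) : ℝ :=
  pd i (fun y => Gamma D y j l h) x - pd j (fun y => Gamma D y i l h) x
    + ∑ m, Gamma D x j l m * Gamma D x i m h - ∑ m, Gamma D x i l m * Gamma D x j m h

/-- The anti-paraKähler condition `∇ φ = 0`, in local components. -/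
def IsAntiParaKahler (D : PreData n) : Prop :=
  ∀ x i j h,
    pd i (fun y => D.phi y h j) x + ∑ m, Gamma D x i m h * D.phi x m j
      - ∑ m, Gamma D x i j m * D.phi x h m = 0

/-- Points of the induced chart of the tangent bundle `TM`: a pair
`(x, u)` of a base point and a fibre coordinate. -/
abbrev TMpt (n : ℕ) := (Fin n → ℝ) × (Fin n → ℝ)

/-- Index set for the induced coordinates on `TM`: `Sum.inl i ↔ xⁱ`, `Sum.inr i ↔ uⁱ`. -/
abbrev Idx (n : ℕ) := Fin n ⊕ Fin n

/-- Natural components of a point/vector of the tangent bundle chart. -/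
def comp (p : TMpt n) : Idx n → ℝ := Sum.elim p.1 p.2

/-- The natural coordinate basis vectors of the tangent bundle chart. -/
noncomputable def ebase (a : Idx n) : TMpt n :=
  Sum.elim (fun i => (Pi.single i 1, 0)) (fun i => (0, Pi.single i 1)) a

/-- Partial derivatives on the tangent bundle chart. -/
noncomputable def pdT (a : Idx n) (f : TMpt n → ℝ) (p : TMpt n) : ℝ :=
  fderiv ℝ f p (ebase a)

/-- `Γ_{i0}{}^h = u^m Γ^h_{im}` (the index `0` denotes contraction with `u`). -/
noncomputable def Gamma0 (D : PreData n) (p : TMpt n) (i h : Fin n) : ℝ :=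
  ∑ m, Gamma D p.1 i m h * p.2 m

/-- Natural components of the adapted frame: `aframe D (Sum.inl i)` is the horizontal
frame field `E_i = ∂/∂xⁱ - Γ_{i0}{}^h ∂/∂u^h`, and `aframe D (Sum.inr i)` is the
vertical frame field `E_ī = ∂/∂uⁱ`. -/
noncomputable def aframe (D : PreData n) (a : Idx n) (p : TMpt n) : Idx n → ℝ :=
  Sum.elim
    (fun i => Sum.elim (fun h => if h = i then (1 : ℝ) else 0) (fun h => - Gamma0 D p i h))
    (fun i => Sum.elim (fun _ => (0 : ℝ)) (fun h => if h = i then 1 else 0)) a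

/-- The matrix expressing adapted components in terms of natural components
(the inverse of the frame matrix of `aframe`). -/
noncomputable def Bmat (D : PreData n) (p : TMpt n) : Matrix (Idx n) (Idx n) ℝ :=
  fun a b =>
    Sum.elim
      (fun h => Sum.elim (fun i => if h = i then (1 : ℝ) else 0) (fun _ => 0) b)
      (fun h => Sum.elim (fun i => Gamma0 D p i h) (fun i => if h = i then 1 else 0) b) a

/-- The lowered vector `w_i = φ^m_i g_{m0}`, i.e. `g(∂_i, φ u)`. -/
noncomputable def wvec (D : PreData n) (p : TMpt n) (i : Fin n) : ℝ :=
  ∑ m, D.phi p.1 m i * (∑ l, D.g p.1 m l * p.2 l)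

/-- The Berger type deformed Sasaki metric in the adapted frame:
block diagonal with blocks `g_{ij}` and `g_{ij} + δ² g(∂_i, φu) g(∂_j, φu)`. -/
noncomputable def gBSad (D : PreData n) (δ : ℝ) (p : TMpt n) : Matrix (Idx n) (Idx n) ℝ :=
  fun a b =>
    Sum.elim
      (fun i => Sum.elim (fun j => D.g p.1 i j) (fun _ => (0 : ℝ)) b)
      (fun i => Sum.elim (fun _ => (0 : ℝ))
        (fun j => D.g p.1 i j + δ ^ 2 * wvec D p i * wvec D p j) b) a

/-- The Berger type deformed Sasaki metric `g_BS` in the natural coordinates of `TM`. -/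
noncomputable def gBS (D : PreData n) (δ : ℝ) (p : TMpt n) : Matrix (Idx n) (Idx n) ℝ :=
  (Bmat D p)ᵀ * gBSad D δ p * Bmat D p

/-- The Sasaki metric `g_S` in the natural coordinates of `TM` (the case `δ = 0`). -/
noncomputable def gS (D : PreData n) (p : TMpt n) : Matrix (Idx n) (Idx n) ℝ :=
  gBS D 0 p

/-- Christoffel symbols of (the Levi-Civita connection of) a metric `G` on the
tangent bundle chart, in natural coordinates. -/
noncomputable def GammaT (G : TMpt n → Matrix (Idx n) (Idx n) ℝ) (p : TMpt n)
    (a b c : Idx n) : ℝ :=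
  (1 / 2) * ∑ d, (G p)⁻¹ c d *
    (pdT a (fun q => G q b d) p + pdT b (fun q => G q a d) p - pdT d (fun q => G q a b) p)

/-- Covariant derivative (w.r.t. the Levi-Civita connection of `G`) of a vector field `Y`
on `TM` in the direction of a vector field `X`, in natural components. -/
noncomputable def covT (G : TMpt n → Matrix (Idx n) (Idx n) ℝ)
    (X Y : TMpt n → Idx n → ℝ) (p : TMpt n) (c : Idx n) : ℝ :=
  ∑ a, X p a * pdT a (fun q => Y q c) p + ∑ a, ∑ b, GammaT G p a b c * X p a * Y p b

/-- `R^{h·}_{·jki} = R_{ljk}{}^s g^{lh} g_{si}`. -/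
noncomputable def Rup (D : PreData n) (x : Fin n → ℝ) (j k i h : Fin n) : ℝ :=
  ∑ l, ∑ s, Riem D x l j k s * (D.g x)⁻¹ l h * D.g x s i

/-- `R^{h·}_{·j0i} = R_{lj0}{}^s g^{lh} g_{si}`, the index `0` contracted with `u`. -/
noncomputable def Rstar (D : PreData n) (x u : Fin n → ℝ) (j i h : Fin n) : ℝ :=
  ∑ l, ∑ s, (∑ m, Riem D x l j m s * u m) * (D.g x)⁻¹ l h * D.g x s i

/-- Second fundamental form (formula (5)), in natural coordinates, of a map `f` from the
tangent bundle chart (source metric `G`) to the base chart, with target Christoffel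
symbols `Γt`. -/
noncomputable def betaTM2M (G : TMpt n → Matrix (Idx n) (Idx n) ℝ)
    (Γt : (Fin n → ℝ) → Fin n → Fin n → Fin n → ℝ) (f : TMpt n → Fin n → ℝ)
    (p : TMpt n) (a b : Idx n) (h : Fin n) : ℝ :=
  pdT a (fun q => pdT b (fun r => f r h) q) p
    - ∑ c, GammaT G p a b c * pdT c (fun r => f r h) p
    + ∑ i, ∑ j, Γt (f p) i j h * pdT a (fun r => f r i) p * pdT b (fun r => f r j) p

/-- Second fundamental form of a map `f` of the base chart to itself, with source
metric `Gsrc.g` and target Christoffel symbols `Γt`. -/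
noncomputable def betaM2M (Gsrc : PreData n)
    (Γt : (Fin n → ℝ) → Fin n → Fin n → Fin n → ℝ) (f : (Fin n → ℝ) → Fin n → ℝ)
    (x : Fin n → ℝ) (i j h : Fin n) : ℝ :=
  pd i (fun y => pd j (fun z => f z h) y) x
    - ∑ m, Gamma Gsrc x i j m * pd m (fun z => f z h) x
    + ∑ a, ∑ b, Γt (f x) a b h * pd i (fun z => f z a) x * pd j (fun z => f z b) x

/-- Natural components of the map `ξ : M → TM`, `x ↦ (x, ξ(x))`, determined by a
vector field `ξ` on `M`. -/
def ximap (ξ : (Fin n → ℝ) → Fin n → ℝ) (x : Fin n → ℝ) : Idx n → ℝ :=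
  Sum.elim x (ξ x)

/-- A vector field `ξ`, regarded as the map `ξ : (M, g) → (TM, g_BS)`, is an isometric
immersion: the pullback of `g_BS` under `x ↦ (x, ξ(x))` equals `g`. -/
def IsIsometricImmersion (D : PreData n) (δ : ℝ) (ξ : (Fin n → ℝ) → Fin n → ℝ) : Prop :=
  ∀ x i j, (∑ a, ∑ b, pd i (fun y => ximap ξ y a) x * pd j (fun y => ximap ξ y b) x *
      gBS D δ (x, ξ x) a b) = D.g x i j

/-- Covariant derivative `∇_i ξ^h` of a vector field. -/
noncomputable def nabla (D : PreData n) (ξ : (Fin n → ℝ) → Fin n → ℝ)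
    (x : Fin n → ℝ) (i h : Fin n) : ℝ :=
  pd i (fun y => ξ y h) x + ∑ m, Gamma D x i m h * ξ x m

/-- Second covariant derivative `∇_i ∇_j ξ^h` of a vector field. -/
noncomputable def nabla2 (D : PreData n) (ξ : (Fin n → ℝ) → Fin n → ℝ)
    (x : Fin n → ℝ) (i j h : Fin n) : ℝ :=
  pd i (fun y => nabla D ξ y j h) x + ∑ m, Gamma D x i m h * nabla D ξ x j m
    - ∑ m, Gamma D x i j m * nabla D ξ x m h

/-- The coefficient `A^h_{mn} = (δ²/(1+δ²)) φ^k_n φ^h_0 g_{mk}` (index `0` contracted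
with the fibre coordinate `u`). -/
noncomputable def Acoef (D : PreData n) (δ : ℝ) (x u : Fin n → ℝ) (m nn h : Fin n) : ℝ :=
  δ ^ 2 / (1 + δ ^ 2) * ∑ l, D.phi x l nn * (∑ r, D.phi x h r * u r) * D.g x m l

/-- Second fundamental form of the map `ξ : (M, g) → (TM, g_BS)`, `x ↦ (x, ξ(x))`,
in natural components. -/
noncomputable def betaM2TM (D : PreData n) (δ : ℝ) (ξ : (Fin n → ℝ) → Fin n → ℝ)
    (x : Fin n → ℝ) (i j : Fin n) (c : Idx n) : ℝ :=
  pd i (fun y => pd j (fun z => ximap ξ z c) y) x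
    - ∑ m, Gamma D x i j m * pd m (fun z => ximap ξ z c) x
    + ∑ a, ∑ b, GammaT (gBS D δ) (x, ξ x) a b c *
        pd i (fun z => ximap ξ z a) x * pd j (fun z => ximap ξ z b) x

/-- Second fundamental form, in natural coordinates, of a map `f : TM → TM`, the source
carrying a metric `G` and the target a (torsion-free) linear connection with
coefficients `Γt`. -/
noncomputable def betaTM2TM (G : TMpt n → Matrix (Idx n) (Idx n) ℝ)
    (Γt : TMpt n → Idx n → Idx n → Idx n → ℝ) (f : TMpt n → TMpt n)
    (p : TMpt n) (a b c : Idx n) : ℝ :=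
  pdT a (fun q => pdT b (fun r => comp (f r) c) q) p
    - ∑ d, GammaT G p a b d * pdT d (fun r => comp (f r) c) p
    + ∑ d, ∑ e, Γt (f p) d e c *
        pdT a (fun r => comp (f r) d) p * pdT b (fun r => comp (f r) e) p

/-- Horizontal projection (w.r.t. the horizontal distribution of `∇`) of a tangent
vector of `TM`, in natural components. -/
noncomputable def hproj (D : PreData n) (p : TMpt n) (v : Idx n → ℝ) : Idx n → ℝ :=
  fun c => ∑ i, v (Sum.inl i) * aframe D (Sum.inl i) p c

/-- Vertical projection of a tangent vector of `TM`, in natural components. -/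
noncomputable def vproj (D : PreData n) (p : TMpt n) (v : Idx n → ℝ) : Idx n → ℝ :=
  fun c => v c - hproj D p v c

/-- The Schouten-Van Kampen connection associated with the Levi-Civita connection of
`g_BS`:  `∇̃_X Y = V(∇_X (V Y)) + H(∇_X (H Y))`. -/
noncomputable def svk (D : PreData n) (δ : ℝ) (X Y : TMpt n → Idx n → ℝ)
    (p : TMpt n) (c : Idx n) : ℝ :=
  vproj D p (covT (gBS D δ) X (fun q => vproj D q (Y q)) p) c
    + hproj D p (covT (gBS D δ) X (fun q => hproj D q (Y q)) p) c

/-- Lie bracket of vector fields on the tangent bundle chart, in natural components. -/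
noncomputable def lieBracketT (X Y : TMpt n → Idx n → ℝ) (p : TMpt n) (c : Idx n) : ℝ :=
  ∑ a, X p a * pdT a (fun q => Y q c) p - ∑ a, Y p a * pdT a (fun q => X q c) p

/-- Torsion tensor `T(X,Y) = ∇_X Y - ∇_Y X - [X,Y]` of a connection (given as an
operator on vector fields) on the tangent bundle chart. -/
noncomputable def torsionOf
    (Conn : (TMpt n → Idx n → ℝ) → (TMpt n → Idx n → ℝ) → TMpt n → Idx n → ℝ)
    (X Y : TMpt n → Idx n → ℝ) (p : TMpt n) (c : Idx n) : ℝ :=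
  Conn X Y p c - Conn Y X p c - lieBracketT X Y p c

/-- The mean connection `∇ᵐ = ∇̃ - ½ T` of the Schouten-Van Kampen connection `∇̃`. -/
noncomputable def meanConn (D : PreData n) (δ : ℝ) (X Y : TMpt n → Idx n → ℝ)
    (p : TMpt n) (c : Idx n) : ℝ :=
  svk D δ X Y p c - (1 / 2) * torsionOf (svk D δ) X Y p c

/-- The constant coordinate vector field `∂/∂x^a` on the tangent bundle chart. -/
def natE (a : Idx n) : TMpt n → Idx n → ℝ := fun _ c => if c = a then 1 else 0

end BergerSasaki
namespace BergerSasaki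


section DirDeriv
variable {E : Type*} [NormedAddCommGroup E] [NormedSpace ℝ E] {f g : E → ℝ} {x v : E}

theorem dd_const (c : ℝ) : fderiv ℝ (fun _ : E => c) x v = 0 := by simp

theorem dd_add (hf : DifferentiableAt ℝ f x) (hg : DifferentiableAt ℝ g x) :
    fderiv ℝ (fun y => f y + g y) x v = fderiv ℝ f x v + fderiv ℝ g x v := by
  rw [fderiv_fun_add hf hg]; rfl

theorem dd_sub (hf : DifferentiableAt ℝ f x) (hg : DifferentiableAt ℝ g x) :
    fderiv ℝ (fun y => f y - g y) x v = fderiv ℝ f x v - fderiv ℝ g x v := by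
  rw [fderiv_fun_sub hf hg]; rfl

theorem dd_mul (hf : DifferentiableAt ℝ f x) (hg : DifferentiableAt ℝ g x) :
    fderiv ℝ (fun y => f y * g y) x v = fderiv ℝ f x v * g x + f x * fderiv ℝ g x v := by
  rw [fderiv_fun_mul hf hg]; simp [mul_comm]; ring

theorem dd_sum {ι : Type*} {s : Finset ι} {F : ι → E → ℝ}
    (h : ∀ i ∈ s, DifferentiableAt ℝ (F i) x) :
    fderiv ℝ (fun y => ∑ i ∈ s, F i y) x v = ∑ i ∈ s, fderiv ℝ (F i) x v := by
  rw [fderiv_fun_sum h]; simp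

theorem dd_const_mul (c : ℝ) (hf : DifferentiableAt ℝ f x) :
    fderiv ℝ (fun y => c * f y) x v = c * fderiv ℝ f x v := by
  rw [fderiv_const_mul hf]; simp

theorem cdiff {F : Type*} [NormedAddCommGroup F] [NormedSpace ℝ F] {f : E → F}
    (h : ContDiff ℝ (⊤ : ℕ∞) f) : Differentiable ℝ f :=
  h.differentiable (by simp)

theorem contDiff_dd (hf : ContDiff ℝ (⊤ : ℕ∞) f) (v : E) :
    ContDiff ℝ (⊤ : ℕ∞) fun x => fderiv ℝ f x v :=
  (hf.fderiv_right (by exact_mod_cast le_top)).clm_apply contDiff_const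

end DirDeriv

section MatSmooth
variable {E : Type*} [NormedAddCommGroup E] [NormedSpace ℝ E] {m : ℕ}

theorem contDiff_det {M : E → Matrix (Fin m) (Fin m) ℝ}
    (hM : ∀ i j, ContDiff ℝ (⊤ : ℕ∞) fun x => M x i j) :
    ContDiff ℝ (⊤ : ℕ∞) fun x => (M x).det := by
  simp only [Matrix.det_apply']
  exact ContDiff.sum fun σ _ => contDiff_const.mul (contDiff_prod fun i _ => hM (σ i) i)

theorem contDiff_adjugate {M : E → Matrix (Fin m) (Fin m) ℝ}
    (hM : ∀ i j, ContDiff ℝ (⊤ : ℕ∞) fun x => M x i j) (i j : Fin m) :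
    ContDiff ℝ (⊤ : ℕ∞) fun x => (M x).adjugate i j := by
  simp only [Matrix.adjugate_apply]
  apply contDiff_det
  intro a b
  by_cases h : a = j <;> simp [Matrix.updateRow_apply, h, hM a b, contDiff_const]

theorem contDiff_inv_entry {M : E → Matrix (Fin m) (Fin m) ℝ}
    (hM : ∀ i j, ContDiff ℝ (⊤ : ℕ∞) fun x => M x i j)
    (hdet : ∀ x, (M x).det ≠ 0) (i j : Fin m) :
    ContDiff ℝ (⊤ : ℕ∞) fun x => (M x)⁻¹ i j := by
  have h : ∀ x, (M x)⁻¹ i j = ((M x).det)⁻¹ * (M x).adjugate i j := by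
    intro x; rw [Matrix.inv_def]; simp [Ring.inverse_eq_inv]
  simp only [h]
  exact ((contDiff_det hM).inv hdet).mul (contDiff_adjugate hM i j)

end MatSmooth

section Chunk2
variable {n : ℕ} (D : PreData n) (δ : ℝ)

/-- The vertical block of the Berger metric in the adapted frame. -/
noncomputable def Vm (p : TMpt n) (i j : Fin n) : ℝ :=
  D.g p.1 i j + δ ^ 2 * wvec D p i * wvec D p j

theorem g_symm_apply (x : Fin n → ℝ) (i j : Fin n) : D.g x i j = D.g x j i :=
  (D.g_symm x).apply j i

theorem Vm_symm (p : TMpt n) (i j : Fin n) : Vm D δ p i j = Vm D δ p j i := by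
  unfold Vm; rw [g_symm_apply]; ring

theorem gBS_ll (p : TMpt n) (i j : Fin n) :
    gBS D δ p (Sum.inl i) (Sum.inl j)
      = D.g p.1 i j + ∑ h, ∑ l, Gamma0 D p i h * Vm D δ p h l * Gamma0 D p j l := by
  simp [gBS, Matrix.mul_apply, Bmat, gBSad, Vm, Fintype.sum_sum_type, Finset.mul_sum,
    Finset.sum_mul, ite_mul, mul_ite]
  rw [Finset.sum_comm]

theorem gBS_lr (p : TMpt n) (i j : Fin n) :
    gBS D δ p (Sum.inl i) (Sum.inr j) = ∑ h, Gamma0 D p i h * Vm D δ p h j := by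
  simp [gBS, Matrix.mul_apply, Bmat, gBSad, Vm, Fintype.sum_sum_type, Finset.mul_sum,
    Finset.sum_mul, ite_mul, mul_ite]

theorem gBS_rl (p : TMpt n) (i j : Fin n) :
    gBS D δ p (Sum.inr i) (Sum.inl j) = ∑ h, Vm D δ p i h * Gamma0 D p j h := by
  simp [gBS, Matrix.mul_apply, Bmat, gBSad, Vm, Fintype.sum_sum_type, Finset.mul_sum,
    Finset.sum_mul, ite_mul, mul_ite]

theorem gBS_rr (p : TMpt n) (i j : Fin n) :
    gBS D δ p (Sum.inr i) (Sum.inr j) = Vm D δ p i j := by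
  simp [gBS, Matrix.mul_apply, Bmat, gBSad, Vm, Fintype.sum_sum_type, Finset.mul_sum,
    Finset.sum_mul, ite_mul, mul_ite]

theorem gBS_symm_apply (p : TMpt n) (a b : Idx n) : gBS D δ p a b = gBS D δ p b a := by
  rcases a with i | i <;> rcases b with j | j <;>
    simp only [gBS_ll, gBS_lr, gBS_rl, gBS_rr]
  · rw [g_symm_apply]
    congr 1
    rw [Finset.sum_comm]
    refine Finset.sum_congr rfl fun h _ => Finset.sum_congr rfl fun l _ => ?_
    rw [Vm_symm]; ring
  · exact Finset.sum_congr rfl fun h _ => by rw [Vm_symm]; ring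
  · exact Finset.sum_congr rfl fun h _ => by rw [Vm_symm]; ring
  · exact Vm_symm D δ p i j

-- Smoothness
theorem sm_pd {f : (Fin n → ℝ) → ℝ} (hf : ContDiff ℝ (⊤ : ℕ∞) f) (i : Fin n) :
    ContDiff ℝ (⊤ : ℕ∞) fun x => pd i f x := contDiff_dd hf _

theorem sm_ginv (i j : Fin n) : ContDiff ℝ (⊤ : ℕ∞) fun x => (D.g x)⁻¹ i j :=
  contDiff_inv_entry D.g_smooth (fun x => (D.g_posdef x).det_pos.ne') i j

theorem sm_Gamma (i j h : Fin n) : ContDiff ℝ (⊤ : ℕ∞) fun x => Gamma D x i j h := by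
  unfold Gamma
  exact contDiff_const.mul (ContDiff.sum fun l _ => (sm_ginv D h l).mul
    (((sm_pd (D.g_smooth j l) i).add (sm_pd (D.g_smooth i l) j)).sub
      (sm_pd (D.g_smooth i j) l)))

theorem sm_fstc {f : (Fin n → ℝ) → ℝ} (hf : ContDiff ℝ (⊤ : ℕ∞) f) :
    ContDiff ℝ (⊤ : ℕ∞) fun q : TMpt n => f q.1 := hf.comp contDiff_fst

theorem sm_sndc (m : Fin n) : ContDiff ℝ (⊤ : ℕ∞) fun q : TMpt n => q.2 m :=
  (ContinuousLinearMap.proj m : ((Fin n → ℝ) →L[ℝ] ℝ)).contDiff.comp contDiff_snd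

theorem sm_Gamma0 (i h : Fin n) : ContDiff ℝ (⊤ : ℕ∞) fun q : TMpt n => Gamma0 D q i h := by
  unfold Gamma0
  exact ContDiff.sum fun m _ => (sm_fstc (sm_Gamma D i m h)).mul (sm_sndc m)

theorem sm_wvec (i : Fin n) : ContDiff ℝ (⊤ : ℕ∞) fun q : TMpt n => wvec D q i := by
  unfold wvec
  exact ContDiff.sum fun m _ => (sm_fstc (D.phi_smooth m i)).mul
    (ContDiff.sum fun l _ => (sm_fstc (D.g_smooth m l)).mul (sm_sndc l))

theorem sm_Vm (i j : Fin n) : ContDiff ℝ (⊤ : ℕ∞) fun q : TMpt n => Vm D δ q i j :=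
  (sm_fstc (D.g_smooth i j)).add ((contDiff_const.mul (sm_wvec D i)).mul (sm_wvec D j))

theorem sm_gBS (a b : Idx n) : ContDiff ℝ (⊤ : ℕ∞) fun q : TMpt n => gBS D δ q a b := by
  rcases a with i | i <;> rcases b with j | j
  · simp only [gBS_ll]
    exact (sm_fstc (D.g_smooth i j)).add (ContDiff.sum fun h _ => ContDiff.sum fun l _ =>
      ((sm_Gamma0 D i h).mul (sm_Vm D δ h l)).mul (sm_Gamma0 D j l))
  · simp only [gBS_lr]
    exact ContDiff.sum fun h _ => (sm_Gamma0 D i h).mul (sm_Vm D δ h j)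
  · simp only [gBS_rl]
    exact ContDiff.sum fun h _ => (sm_Vm D δ i h).mul (sm_Gamma0 D j h)
  · simp only [gBS_rr]
    exact sm_Vm D δ i j

end Chunk2


section Chunk3
variable {n : ℕ} (D : PreData n) (δ : ℝ)

theorem dotm {ι : Type*} [Fintype ι] (G : Matrix ι ι ℝ) (v w : ι → ℝ) :
    (∑ a, ∑ b, v a * w b * G a b) = v ⬝ᵥ (G *ᵥ w) := by
  simp only [dotProduct, Matrix.mulVec, Finset.mul_sum]
  exact Finset.sum_congr rfl fun a _ => Finset.sum_congr rfl fun b _ => by ring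

theorem quad_transform {ι : Type*} [Fintype ι] (M N : Matrix ι ι ℝ) (v w : ι → ℝ) :
    v ⬝ᵥ ((Nᵀ * M * N) *ᵥ w) = (N *ᵥ v) ⬝ᵥ (M *ᵥ (N *ᵥ w)) := by
  rw [← Matrix.mulVec_mulVec, ← Matrix.mulVec_mulVec, Matrix.dotProduct_mulVec v,
    Matrix.vecMul_transpose, Matrix.dotProduct_mulVec (N *ᵥ v)]

/-- The matrix of the vertical block. -/
noncomputable def Vmat (p : TMpt n) : Matrix (Fin n) (Fin n) ℝ := fun i j => Vm D δ p i j

theorem gBSad_quad (p : TMpt n) (yH yV zH zV : Fin n → ℝ) :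
    Sum.elim yH yV ⬝ᵥ (gBSad D δ p *ᵥ Sum.elim zH zV)
      = yH ⬝ᵥ (D.g p.1 *ᵥ zH) + yV ⬝ᵥ (Vmat D δ p *ᵥ zV) := by
  simp [dotProduct, Matrix.mulVec, gBSad, Vmat, Vm, Fintype.sum_sum_type, Finset.sum_add_distrib]

/-- Natural components of the differential of `x ↦ (x, ξ x)` in direction `i`. -/
noncomputable def dxi (ξ : (Fin n → ℝ) → Fin n → ℝ) (x : Fin n → ℝ) (i : Fin n) :
    Idx n → ℝ := fun a => pd i (fun y => ximap ξ y a) x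

theorem dxi_inl (ξ : (Fin n → ℝ) → Fin n → ℝ) (x : Fin n → ℝ) (i a : Fin n) :
    dxi ξ x i (Sum.inl a) = if a = i then 1 else 0 := by
  have h1 : (fun y : Fin n → ℝ => ximap ξ y (Sum.inl a))
      = (ContinuousLinearMap.proj a : (Fin n → ℝ) →L[ℝ] ℝ) := rfl
  simp only [dxi, pd, h1, ContinuousLinearMap.fderiv, ContinuousLinearMap.proj_apply,
    Pi.single_apply]

theorem dxi_inr (ξ : (Fin n → ℝ) → Fin n → ℝ) (x : Fin n → ℝ) (i a : Fin n) :
    dxi ξ x i (Sum.inr a) = pd i (fun y => ξ y a) x := rfl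

/-- Components of the covariant derivative `∇ξ` in direction `i`. -/
noncomputable def nu (ξ : (Fin n → ℝ) → Fin n → ℝ) (x : Fin n → ℝ) (i : Fin n) :
    Fin n → ℝ := fun h => nabla D ξ x i h

theorem Bmat_mulVec_dxi (ξ : (Fin n → ℝ) → Fin n → ℝ) (x : Fin n → ℝ) (i : Fin n) :
    Bmat D (x, ξ x) *ᵥ dxi ξ x i = Sum.elim (fun h => if h = i then 1 else 0) (nu D ξ x i) := by
  funext c
  rcases c with h | h <;>
    simp [Matrix.mulVec, dotProduct, Bmat, Fintype.sum_sum_type, dxi_inl, dxi_inr,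
      nu, nabla, Gamma0, mul_ite, ite_mul, mul_comm, add_comm]

theorem single_quad (x : Fin n → ℝ) (i j : Fin n) :
    (fun h => if h = i then (1:ℝ) else 0) ⬝ᵥ (D.g x *ᵥ fun h => if h = j then (1:ℝ) else 0)
      = D.g x i j := by
  simp [dotProduct, Matrix.mulVec, mul_ite, ite_mul]

/-- Key pullback formula. -/
theorem pullback_eq (ξ : (Fin n → ℝ) → Fin n → ℝ) (x : Fin n → ℝ) (i j : Fin n) :
    (∑ a, ∑ b, pd i (fun y => ximap ξ y a) x * pd j (fun y => ximap ξ y b) x *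
        gBS D δ (x, ξ x) a b)
      = D.g x i j + nu D ξ x i ⬝ᵥ (Vmat D δ (x, ξ x) *ᵥ nu D ξ x j) := by
  have h0 : (∑ a, ∑ b, pd i (fun y => ximap ξ y a) x * pd j (fun y => ximap ξ y b) x *
      gBS D δ (x, ξ x) a b) = dxi ξ x i ⬝ᵥ (gBS D δ (x, ξ x) *ᵥ dxi ξ x j) :=
    dotm _ _ _
  rw [h0]
  show dxi ξ x i ⬝ᵥ (((Bmat D (x, ξ x))ᵀ * gBSad D δ (x, ξ x) * Bmat D (x, ξ x)) *ᵥ dxi ξ x j) = _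
  rw [quad_transform, Bmat_mulVec_dxi, Bmat_mulVec_dxi, gBSad_quad, single_quad]

theorem Vmat_quad_pos (p : TMpt n) (v : Fin n → ℝ) (hv : v ≠ 0) :
    0 < v ⬝ᵥ (Vmat D δ p *ᵥ v) := by
  have hg : 0 < v ⬝ᵥ (D.g p.1 *ᵥ v) := by
    have := (D.g_posdef p.1).dotProduct_mulVec_pos hv
    simpa using this
  have hsplit : v ⬝ᵥ (Vmat D δ p *ᵥ v)
      = v ⬝ᵥ (D.g p.1 *ᵥ v) + δ ^ 2 * (∑ h, v h * wvec D p h) ^ 2 := by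
    simp only [dotProduct, Matrix.mulVec, Vmat, Vm]
    rw [sq (∑ h, v h * wvec D p h), Finset.sum_mul_sum, Finset.mul_sum]
    simp only [Finset.mul_sum]
    rw [← Finset.sum_add_distrib]
    refine Finset.sum_congr rfl fun a _ => ?_
    rw [← Finset.sum_add_distrib]
    refine Finset.sum_congr rfl fun b _ => ?_
    ring
  rw [hsplit]
  positivity

theorem Vmat_quad_zero (p : TMpt n) (v : Fin n → ℝ)
    (h : v ⬝ᵥ (Vmat D δ p *ᵥ v) = 0) : v = 0 := by
  by_contra hv
  exact absurd h (Vmat_quad_pos D δ p v hv).ne'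

end Chunk3


section Chunk4
variable {n : ℕ} (D : PreData n) (δ : ℝ)

theorem pd_congr {f g : (Fin n → ℝ) → ℝ} (h : ∀ y, f y = g y) (i : Fin n) (x : Fin n → ℝ) :
    pd i f x = pd i g x := by
  have : f = g := funext h
  rw [this]

theorem pd_const (c : ℝ) (i : Fin n) (x : Fin n → ℝ) : pd i (fun _ => c) x = 0 := by
  simp [pd]

theorem pd_sum_mul {ι : Type*} [Fintype ι] (f g : ι → (Fin n → ℝ) → ℝ)
    (hf : ∀ b, ContDiff ℝ (⊤ : ℕ∞) (f b)) (hg : ∀ b, ContDiff ℝ (⊤ : ℕ∞) (g b))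
    (i : Fin n) (x : Fin n → ℝ) :
    pd i (fun y => ∑ b, f b y * g b y) x
      = ∑ b, (pd i (f b) x * g b x + f b x * pd i (g b) x) := by
  unfold pd
  rw [dd_sum (F := fun b y => f b y * g b y) fun b _ => ((cdiff (hf b) x).mul (cdiff (hg b) x))]
  exact Finset.sum_congr rfl fun b _ =>
    dd_mul (cdiff (hf b) x) (cdiff (hg b) x)

theorem clm_pi_decomp (L : ((Fin n → ℝ) × (Fin n → ℝ)) →L[ℝ] ℝ) (w : Fin n → ℝ) :
    L (0, w) = ∑ a, w a * L (0, Pi.single a 1) := by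
  have hw : ((0 : Fin n → ℝ), w) = ∑ a, ((0 : Fin n → ℝ), Pi.single a (w a)) := by
    refine Prod.ext ?_ ?_
    · rw [Prod.fst_sum]; simp
    · rw [Prod.snd_sum]; exact (Finset.univ_sum_single w).symm
  rw [hw, map_sum]
  refine Finset.sum_congr rfl fun a _ => ?_
  have h1 : ((0 : Fin n → ℝ), Pi.single a (w a)) = w a • (((0 : Fin n → ℝ), (Pi.single a 1 : Fin n → ℝ)) : (Fin n → ℝ) × (Fin n → ℝ)) := by
    refine Prod.ext (by simp) ?_
    funext b
    by_cases hb : b = a <;> simp [Pi.single_apply, hb]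
  rw [h1, _root_.map_smul, smul_eq_mul]

/-- Chain rule along the section `x ↦ (x, ξ x)`. -/
theorem pd_section (ξ : (Fin n → ℝ) → Fin n → ℝ)
    (hξ : ∀ h, ContDiff ℝ (⊤ : ℕ∞) fun x => ξ x h)
    (F : TMpt n → ℝ) (hF : ContDiff ℝ (⊤ : ℕ∞) F) (i : Fin n) (x : Fin n → ℝ) :
    pd i (fun y => F (y, ξ y)) x
      = pdT (Sum.inl i) F (x, ξ x)
        + ∑ a, pd i (fun y => ξ y a) x * pdT (Sum.inr a) F (x, ξ x) := by
  have hξd : DifferentiableAt ℝ (fun y : Fin n → ℝ => ξ y) x :=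
    cdiff (contDiff_pi.2 hξ) x
  have hs : DifferentiableAt ℝ (fun y : Fin n → ℝ => (y, ξ y)) x :=
    differentiableAt_fun_id.prodMk hξd
  have hFd : DifferentiableAt ℝ F (x, ξ x) := cdiff hF _
  unfold pd
  rw [show (fun y => F (y, ξ y)) = F ∘ (fun y : Fin n → ℝ => (y, ξ y)) from rfl,
    fderiv_comp x hFd hs]
  rw [ContinuousLinearMap.comp_apply, DifferentiableAt.fderiv_prodMk differentiableAt_fun_id hξd]
  have hsplit : (ContinuousLinearMap.prod (fderiv ℝ (fun y : Fin n → ℝ => y) x)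
        (fderiv ℝ (fun y : Fin n → ℝ => ξ y) x)) (Pi.single i 1)
      = ((Pi.single i 1 : Fin n → ℝ), (0 : Fin n → ℝ))
        + ((0 : Fin n → ℝ), fderiv ℝ (fun y : Fin n → ℝ => ξ y) x (Pi.single i 1)) := by
    rw [ContinuousLinearMap.prod_apply]
    refine Prod.ext (by simp) (by simp)
  rw [hsplit, map_add, clm_pi_decomp]
  have hpdT : pdT (Sum.inl i) F (x, ξ x)
      = fderiv ℝ F (x, ξ x) ((Pi.single i 1 : Fin n → ℝ), (0 : Fin n → ℝ)) := rfl
  rw [← hpdT]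
  congr 1
  refine Finset.sum_congr rfl fun a _ => ?_
  have hcoord : fderiv ℝ (fun y : Fin n → ℝ => ξ y) x (Pi.single i 1) a
      = pd i (fun y => ξ y a) x := by
    rw [fderiv_pi fun b => cdiff (hξ b) x]
    rfl
  rw [hcoord]
  rfl

/-- `pdT` of a function of the base point only. -/
theorem pdT_fst {f : (Fin n → ℝ) → ℝ} (hf : ContDiff ℝ (⊤ : ℕ∞) f) (p : TMpt n) (e : Idx n) :
    pdT e (fun q : TMpt n => f q.1) p = Sum.elim (fun h => pd h f p.1) (fun _ => 0) e := by
  have hfd : DifferentiableAt ℝ f p.1 := cdiff hf _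
  have : pdT e (fun q : TMpt n => f q.1) p = fderiv ℝ (f ∘ Prod.fst) p (ebase e) := rfl
  rw [this, fderiv_comp p hfd differentiableAt_fst, ContinuousLinearMap.comp_apply, fderiv_fst]
  rcases e with h | h
  · rfl
  · show fderiv ℝ f p.1 0 = 0
    simp

-- isometric immersion
theorem iso_of_parallel (ξ : (Fin n → ℝ) → Fin n → ℝ)
    (hpar : ∀ x i h, nabla D ξ x i h = 0) : IsIsometricImmersion D δ ξ := by
  intro x i j
  rw [pullback_eq]
  have hnu : nu D ξ x j = 0 := funext fun h => hpar x j h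
  rw [hnu]
  simp

theorem parallel_of_iso (ξ : (Fin n → ℝ) → Fin n → ℝ)
    (hiso : IsIsometricImmersion D δ ξ) : ∀ x i h, nabla D ξ x i h = 0 := by
  intro x i h
  have hii := hiso x i i
  rw [pullback_eq] at hii
  have h0 : nu D ξ x i ⬝ᵥ (Vmat D δ (x, ξ x) *ᵥ nu D ξ x i) = 0 := by linarith
  have := Vmat_quad_zero D δ (x, ξ x) _ h0
  exact congrFun this h

end Chunk4


section Chunk5a
variable {n : ℕ} (D : PreData n) (δ : ℝ)

theorem Bmat_mulVec (p : TMpt n) (u : Idx n → ℝ) :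
    Bmat D p *ᵥ u = Sum.elim (fun h => u (Sum.inl h))
      (fun h => (∑ i, Gamma0 D p i h * u (Sum.inl i)) + u (Sum.inr h)) := by
  funext c
  rcases c with h | h <;>
    simp [Matrix.mulVec, dotProduct, Bmat, Fintype.sum_sum_type, ite_mul, mul_ite]

theorem BmatT_mulVec (p : TMpt n) (u : Idx n → ℝ) :
    (Bmat D p)ᵀ *ᵥ u = Sum.elim
      (fun i => u (Sum.inl i) + ∑ h, Gamma0 D p i h * u (Sum.inr h))
      (fun i => u (Sum.inr i)) := by
  funext c
  rcases c with h | h <;>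
    simp [Matrix.mulVec, dotProduct, Bmat, Matrix.transpose_apply, Fintype.sum_sum_type,
      ite_mul, mul_ite]

theorem gBSad_mulVec (p : TMpt n) (zH zV : Fin n → ℝ) :
    gBSad D δ p *ᵥ Sum.elim zH zV = Sum.elim
      (fun h => ∑ m, D.g p.1 h m * zH m) (fun h => ∑ m, Vm D δ p h m * zV m) := by
  funext c
  rcases c with h | h <;>
    simp [Matrix.mulVec, dotProduct, gBSad, Vm, Fintype.sum_sum_type]

theorem g_quad_pos (x : Fin n → ℝ) (v : Fin n → ℝ) (hv : v ≠ 0) :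
    0 < v ⬝ᵥ (D.g x *ᵥ v) := by
  have := (D.g_posdef x).dotProduct_mulVec_pos hv
  simpa using this

theorem g_quad_nonneg (x : Fin n → ℝ) (v : Fin n → ℝ) : 0 ≤ v ⬝ᵥ (D.g x *ᵥ v) := by
  by_cases hv : v = 0
  · simp [hv]
  · exact (g_quad_pos D x v hv).le

theorem Vmat_quad_nonneg (p : TMpt n) (v : Fin n → ℝ) : 0 ≤ v ⬝ᵥ (Vmat D δ p *ᵥ v) := by
  by_cases hv : v = 0
  · simp [hv]
  · exact (Vmat_quad_pos D δ p v hv).le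

theorem gBS_posdef (p : TMpt n) : (gBS D δ p).PosDef := by
  refine Matrix.PosDef.of_dotProduct_mulVec_pos ?_ ?_
  · show (gBS D δ p)ᴴ = gBS D δ p
    ext a b
    rw [Matrix.conjTranspose_apply]
    show star (gBS D δ p b a) = gBS D δ p a b
    rw [star_trivial, gBS_symm_apply]
  · intro v hv
    have hq : star v = v := funext fun a => star_trivial _
    rw [hq]
    show (0:ℝ) < v ⬝ᵥ (((Bmat D p)ᵀ * gBSad D δ p * Bmat D p) *ᵥ v)
    rw [quad_transform, Bmat_mulVec, gBSad_quad]
    set vH : Fin n → ℝ := fun h => v (Sum.inl h) with hvH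
    set vV : Fin n → ℝ := fun h => (∑ i, Gamma0 D p i h * v (Sum.inl i)) + v (Sum.inr h) with hvV
    by_cases h1 : vH = 0
    · have h2 : vV ≠ 0 := by
        intro h2
        apply hv
        funext c
        rcases c with h | h
        · exact congrFun h1 h
        · have e2 := congrFun h2 h
          have e1 : ∀ i, v (Sum.inl i) = 0 := fun i => congrFun h1 i
          simp only [hvV, e1, mul_zero, Finset.sum_const_zero, zero_add] at e2
          exact e2
      have := Vmat_quad_pos D δ p vV h2
      have hg := g_quad_nonneg D p.1 vH
      linarith
    · have := g_quad_pos D p.1 vH h1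
      have hV := Vmat_quad_nonneg D δ p vV
      linarith

theorem gBS_isUnit_det (p : TMpt n) : IsUnit (gBS D δ p).det :=
  isUnit_iff_ne_zero.2 (gBS_posdef D δ p).det_pos.ne'

theorem GammaT_lowered (p : TMpt n) (a b e : Idx n) :
    (∑ c, gBS D δ p e c * GammaT (gBS D δ) p a b c)
      = (1 / 2) * (pdT a (fun q => gBS D δ q b e) p + pdT b (fun q => gBS D δ q a e) p
          - pdT e (fun q => gBS D δ q a b) p) := by
  unfold GammaT
  have step1 : (∑ c, gBS D δ p e c * ((1 / 2) * ∑ d, (gBS D δ p)⁻¹ c d *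
        (pdT a (fun q => gBS D δ q b d) p + pdT b (fun q => gBS D δ q a d) p
          - pdT d (fun q => gBS D δ q a b) p)))
      = (1 / 2) * ∑ d, (∑ c, gBS D δ p e c * (gBS D δ p)⁻¹ c d) *
        (pdT a (fun q => gBS D δ q b d) p + pdT b (fun q => gBS D δ q a d) p
          - pdT d (fun q => gBS D δ q a b) p) := by
    have e1 : ∀ c, gBS D δ p e c * ((1 / 2) * ∑ d, (gBS D δ p)⁻¹ c d *
          (pdT a (fun q => gBS D δ q b d) p + pdT b (fun q => gBS D δ q a d) p
            - pdT d (fun q => gBS D δ q a b) p))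
        = ∑ d, (1 / 2) * (gBS D δ p e c * ((gBS D δ p)⁻¹ c d *
          (pdT a (fun q => gBS D δ q b d) p + pdT b (fun q => gBS D δ q a d) p
            - pdT d (fun q => gBS D δ q a b) p))) := fun c => by
      rw [Finset.mul_sum, Finset.mul_sum]
      exact Finset.sum_congr rfl fun d _ => by ring
    simp only [e1]
    rw [Finset.sum_comm, Finset.mul_sum]
    refine Finset.sum_congr rfl fun d _ => ?_
    rw [Finset.sum_mul, Finset.mul_sum]
    exact Finset.sum_congr rfl fun c _ => by ring
  rw [step1]
  have step2 : ∀ d, (∑ c, gBS D δ p e c * (gBS D δ p)⁻¹ c d)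
      = (1 : Matrix (Idx n) (Idx n) ℝ) e d := by
    intro d
    rw [← Matrix.mul_apply, Matrix.mul_nonsing_inv _ (gBS_isUnit_det D δ p)]
  simp only [step2, Matrix.one_apply, ite_mul, one_mul, zero_mul]
  rw [Finset.sum_ite_eq]
  simp

theorem Gamma_lower (x : Fin n → ℝ) (i j h : Fin n) :
    (∑ m, Gamma D x i j m * D.g x m h)
      = (1 / 2) * (pd i (fun y => D.g y j h) x + pd j (fun y => D.g y i h) x
          - pd h (fun y => D.g y i j) x) := by
  unfold Gamma
  have step1 : (∑ m, ((1 / 2) * ∑ l, (D.g x)⁻¹ m l *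
        (pd i (fun y => D.g y j l) x + pd j (fun y => D.g y i l) x
          - pd l (fun y => D.g y i j) x)) * D.g x m h)
      = (1 / 2) * ∑ l, (∑ m, D.g x h m * (D.g x)⁻¹ m l) *
        (pd i (fun y => D.g y j l) x + pd j (fun y => D.g y i l) x
          - pd l (fun y => D.g y i j) x) := by
    have e1 : ∀ m, ((1 / 2) * ∑ l, (D.g x)⁻¹ m l *
          (pd i (fun y => D.g y j l) x + pd j (fun y => D.g y i l) x
            - pd l (fun y => D.g y i j) x)) * D.g x m h
        = ∑ l, (1 / 2) * (D.g x h m * ((D.g x)⁻¹ m l *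
          (pd i (fun y => D.g y j l) x + pd j (fun y => D.g y i l) x
            - pd l (fun y => D.g y i j) x))) := fun m => by
      rw [Finset.mul_sum, Finset.sum_mul]
      refine Finset.sum_congr rfl fun l _ => ?_
      rw [g_symm_apply D x h m]
      ring
    simp only [e1]
    rw [Finset.sum_comm, Finset.mul_sum]
    refine Finset.sum_congr rfl fun l _ => ?_
    rw [Finset.sum_mul, Finset.mul_sum]
    exact Finset.sum_congr rfl fun m _ => by ring
  rw [step1]
  have hunit : IsUnit (D.g x).det := isUnit_iff_ne_zero.2 (D.g_posdef x).det_pos.ne'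
  have step2 : ∀ l, (∑ m, D.g x h m * (D.g x)⁻¹ m l)
      = (1 : Matrix (Fin n) (Fin n) ℝ) h l := by
    intro l
    rw [← Matrix.mul_apply, Matrix.mul_nonsing_inv _ hunit]
  simp only [step2, Matrix.one_apply, ite_mul, one_mul, zero_mul]
  rw [Finset.sum_ite_eq]
  simp

end Chunk5a


section Chunk5b
variable {n : ℕ} (D : PreData n) (δ : ℝ) (ξ : (Fin n → ℝ) → Fin n → ℝ)

theorem pdT_congr {f g : TMpt n → ℝ} (h : ∀ q, f q = g q) (e : Idx n) (p : TMpt n) :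
    pdT e f p = pdT e g p := by
  have : f = g := funext h
  rw [this]

theorem pdT_add {f g : TMpt n → ℝ} {p : TMpt n} (hf : DifferentiableAt ℝ f p)
    (hg : DifferentiableAt ℝ g p) (e : Idx n) :
    pdT e (fun q => f q + g q) p = pdT e f p + pdT e g p := dd_add hf hg

theorem pdT_sum_mul {ι : Type*} [Fintype ι] {f g : ι → TMpt n → ℝ} {p : TMpt n}
    (hf : ∀ b, ContDiff ℝ (⊤ : ℕ∞) (f b)) (hg : ∀ b, ContDiff ℝ (⊤ : ℕ∞) (g b)) (e : Idx n) :
    pdT e (fun q => ∑ b, f b q * g b q) p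
      = ∑ b, (pdT e (f b) p * g b p + f b p * pdT e (g b) p) := by
  unfold pdT
  rw [dd_sum (F := fun b q => f b q * g b q) fun b _ => (cdiff (hf b) p).mul (cdiff (hg b) p)]
  exact Finset.sum_congr rfl fun b _ => dd_mul (cdiff (hf b) p) (cdiff (hg b) p)

theorem sm_sect (hξ : ∀ h, ContDiff ℝ (⊤ : ℕ∞) fun x => ξ x h) {F : TMpt n → ℝ} (hF : ContDiff ℝ (⊤ : ℕ∞) F) :
    ContDiff ℝ (⊤ : ℕ∞) fun y => F (y, ξ y) :=
  hF.comp (contDiff_id.prodMk (contDiff_pi.2 hξ))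

theorem sm_Dfn (hξ : ∀ h, ContDiff ℝ (⊤ : ℕ∞) fun x => ξ x h) (j : Fin n) (b : Idx n) :
    ContDiff ℝ (⊤ : ℕ∞) fun y => pd j (fun z => ximap ξ z b) y := by
  rcases b with a | a
  · have h : (fun y => pd j (fun z => ximap ξ z (Sum.inl a)) y)
        = fun _ => (if a = j then (1:ℝ) else 0) := funext fun y => dxi_inl ξ y j a
    rw [h]
    exact contDiff_const
  · exact sm_pd (hξ a) j

theorem pdxi_eq (hpar : ∀ x i h, nabla D ξ x i h = 0) : ∀ (x : Fin n → ℝ) (i h : Fin n),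
    pd i (fun y => ξ y h) x = -Gamma0 D (x, ξ x) i h := by
  intro x i h
  have h0 := hpar x i h
  unfold nabla at h0
  unfold Gamma0
  show pd i (fun y => ξ y h) x = -∑ m, Gamma D x i m h * ξ x m
  linarith [h0]

theorem Bmat_mulVec_dxi_gen (hpar : ∀ x i h, nabla D ξ x i h = 0) (x : Fin n → ℝ) (i : Fin n) (q : TMpt n) :
    Bmat D q *ᵥ dxi ξ x i = Sum.elim (fun h => if h = i then 1 else 0)
      (fun h => Gamma0 D q i h - Gamma0 D (x, ξ x) i h) := by
  rw [Bmat_mulVec]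
  funext c
  rcases c with h | h
  · simp [dxi_inl]
  · show (∑ m, Gamma0 D q m h * dxi ξ x i (Sum.inl m)) + dxi ξ x i (Sum.inr h) = _
    rw [show dxi ξ x i (Sum.inr h) = pd i (fun y => ξ y h) x from rfl,
      pdxi_eq D ξ hpar x i h]
    simp [dxi_inl, mul_ite, sub_eq_add_neg]

theorem Q_eval (hpar : ∀ x i h, nabla D ξ x i h = 0) (y : Fin n → ℝ) (j : Fin n) (e : Idx n) :
    (∑ b, pd j (fun z => ximap ξ z b) y * gBS D δ (y, ξ y) b e)
      = Sum.elim (fun h => D.g y j h) (fun _ => 0) e := by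
  have h1 : (∑ b, pd j (fun z => ximap ξ z b) y * gBS D δ (y, ξ y) b e)
      = (gBS D δ (y, ξ y) *ᵥ dxi ξ y j) e := by
    show _ = (fun b => gBS D δ (y, ξ y) e b) ⬝ᵥ dxi ξ y j
    rw [dotProduct]
    refine Finset.sum_congr rfl fun b _ => ?_
    rw [gBS_symm_apply D δ _ e b, mul_comm]
    rfl
  rw [h1]
  have hnu : nu D ξ y j = fun _ => 0 := funext fun h => hpar y j h
  show (((Bmat D (y, ξ y))ᵀ * gBSad D δ (y, ξ y) * Bmat D (y, ξ y)) *ᵥ dxi ξ y j) e = _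
  rw [← Matrix.mulVec_mulVec, ← Matrix.mulVec_mulVec, Bmat_mulVec_dxi, hnu, gBSad_mulVec,
    BmatT_mulVec]
  rcases e with h | h
  · show (∑ m, D.g y h m * (if m = j then (1:ℝ) else 0))
        + (∑ h', Gamma0 D (y, ξ y) h h' * ∑ m, Vm D δ (y, ξ y) h' m * (0:ℝ)) = D.g y j h
    simp [mul_ite, g_symm_apply D y h j]
  · show (∑ m, Vm D δ (y, ξ y) h m * (0:ℝ)) = 0
    simp

theorem chain_sum (hξ : ∀ h, ContDiff ℝ (⊤ : ℕ∞) fun x => ξ x h) {F : TMpt n → ℝ} (hF : ContDiff ℝ (⊤ : ℕ∞) F) (x : Fin n → ℝ) (i : Fin n) :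
    (∑ a, dxi ξ x i a * pdT a F (x, ξ x)) = pd i (fun y => F (y, ξ y)) x := by
  rw [pd_section ξ hξ F hF i x, Fintype.sum_sum_type]
  have h1 : (∑ a', dxi ξ x i (Sum.inl a') * pdT (Sum.inl a') F (x, ξ x))
      = pdT (Sum.inl i) F (x, ξ x) := by
    simp [dxi_inl, ite_mul]
  have h2 : (∑ a', dxi ξ x i (Sum.inr a') * pdT (Sum.inr a') F (x, ξ x))
      = ∑ a, pd i (fun y => ξ y a) x * pdT (Sum.inr a) F (x, ξ x) := rfl
  rw [h1, h2]

theorem T3_eval (hpar : ∀ x i h, nabla D ξ x i h = 0) (x : Fin n → ℝ) (i j : Fin n) (e : Idx n) :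
    pdT e (fun q => ∑ a, ∑ b, dxi ξ x i a * dxi ξ x j b * gBS D δ q a b) (x, ξ x)
      = Sum.elim (fun h => pd h (fun y => D.g y i j) x) (fun _ => 0) e := by
  have hfe : ∀ q : TMpt n, (∑ a, ∑ b, dxi ξ x i a * dxi ξ x j b * gBS D δ q a b)
      = D.g q.1 i j + ∑ h, (Gamma0 D q i h - Gamma0 D (x, ξ x) i h) *
          (∑ l, Vm D δ q h l * (Gamma0 D q j l - Gamma0 D (x, ξ x) j l)) := by
    intro q
    rw [dotm]
    show dxi ξ x i ⬝ᵥ (((Bmat D q)ᵀ * gBSad D δ q * Bmat D q) *ᵥ dxi ξ x j) = _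
    rw [quad_transform, Bmat_mulVec_dxi_gen D ξ hpar x i q, Bmat_mulVec_dxi_gen D ξ hpar x j q,
      gBSad_quad, single_quad]
    rfl
  rw [pdT_congr hfe]
  have hr : ∀ (i' : Fin n) (h : Fin n), ContDiff ℝ (⊤ : ℕ∞)
      fun q : TMpt n => Gamma0 D q i' h - Gamma0 D (x, ξ x) i' h :=
    fun i' h => (sm_Gamma0 D i' h).sub contDiff_const
  have hs : ∀ h : Fin n, ContDiff ℝ (⊤ : ℕ∞)
      fun q : TMpt n => ∑ l, Vm D δ q h l * (Gamma0 D q j l - Gamma0 D (x, ξ x) j l) :=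
    fun h => ContDiff.sum fun l _ => (sm_Vm D δ h l).mul (hr j l)
  rw [pdT_add (cdiff (sm_fstc (D.g_smooth i j)) _)
      (cdiff (ContDiff.sum fun h _ => (hr i h).mul (hs h)) _) e]
  rw [pdT_sum_mul (fun h => hr i h) hs e]
  have hz : ∀ h : Fin n,
      pdT e (fun q : TMpt n => Gamma0 D q i h - Gamma0 D (x, ξ x) i h) (x, ξ x) *
        (∑ l, Vm D δ (x, ξ x) h l * (Gamma0 D (x, ξ x) j l - Gamma0 D (x, ξ x) j l))
      + (Gamma0 D (x, ξ x) i h - Gamma0 D (x, ξ x) i h) *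
        pdT e (fun q : TMpt n => ∑ l, Vm D δ q h l *
          (Gamma0 D q j l - Gamma0 D (x, ξ x) j l)) (x, ξ x) = 0 := by
    intro h
    simp
  rw [Finset.sum_congr rfl fun h _ => hz h]
  rw [pdT_fst (D.g_smooth i j)]
  simp

theorem ginv_symm (x : Fin n → ℝ) (i j : Fin n) : (D.g x)⁻¹ i j = (D.g x)⁻¹ j i := by
  have h1 : ((D.g x)⁻¹)ᵀ = (D.g x)⁻¹ := by
    rw [Matrix.transpose_nonsing_inv, (D.g_symm x)]
  conv_lhs => rw [← h1]
  rw [Matrix.transpose_apply]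

theorem trace_swap (x : Fin n → ℝ) (F : Fin n → Fin n → ℝ) :
    (∑ i, ∑ j, (D.g x)⁻¹ i j * F i j) = ∑ i, ∑ j, (D.g x)⁻¹ i j * F j i := by
  rw [Finset.sum_comm]
  refine Finset.sum_congr rfl fun i _ => Finset.sum_congr rfl fun j _ => ?_
  rw [ginv_symm]

end Chunk5b


section Chunk5c
variable {n : ℕ} (D : PreData n) (δ : ℝ) (ξ : (Fin n → ℝ) → Fin n → ℝ)

theorem Q_eval' (hpar : ∀ x i h, nabla D ξ x i h = 0) (y : Fin n → ℝ) (j : Fin n) (e : Idx n) :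
    (∑ b, dxi ξ y j b * gBS D δ (y, ξ y) b e)
      = Sum.elim (fun h => D.g y j h) (fun _ => 0) e :=
  Q_eval D δ ξ hpar y j e

theorem pd_pd_ximap_inl_zero (x : Fin n → ℝ) (i j h : Fin n) :
    pd i (fun y => pd j (fun z => ximap ξ z (Sum.inl h)) y) x = 0 := by
  have h1 : ∀ y, pd j (fun z => ximap ξ z (Sum.inl h)) y = (if h = j then (1:ℝ) else 0) :=
    fun y => dxi_inl ξ y j h
  rw [pd_congr h1 i x]
  exact pd_const _ i x

theorem TA_eval (hξ : ∀ h, ContDiff ℝ (⊤ : ℕ∞) fun x => ξ x h)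
    (hpar : ∀ x i h, nabla D ξ x i h = 0) (x : Fin n → ℝ) (i j : Fin n) (e : Idx n) :
    (∑ b, dxi ξ x j b * pd i (fun y => gBS D δ (y, ξ y) b e) x)
      = Sum.elim (fun h => pd i (fun y => D.g y j h) x) (fun _ => 0) e
        - ∑ h, pd i (fun y => pd j (fun z => ξ z h) y) x * gBS D δ (x, ξ x) (Sum.inr h) e := by
  have hpm := pd_sum_mul (f := fun b y => pd j (fun z => ximap ξ z b) y)
    (g := fun b y => gBS D δ (y, ξ y) b e) (sm_Dfn ξ hξ j)
    (fun b => sm_sect ξ hξ (sm_gBS D δ b e)) i x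
  have hQ : pd i (fun y => ∑ b, pd j (fun z => ximap ξ z b) y * gBS D δ (y, ξ y) b e) x
      = Sum.elim (fun h => pd i (fun y => D.g y j h) x) (fun _ => 0) e := by
    rw [pd_congr (fun y => Q_eval D δ ξ hpar y j e) i x]
    rcases e with h | h
    · rfl
    · exact pd_const 0 i x
  rw [hQ] at hpm
  have hsp : (∑ b : Idx n, (pd i (fun y => pd j (fun z => ximap ξ z b) y) x *
        gBS D δ (x, ξ x) b e
      + pd j (fun z => ximap ξ z b) x * pd i (fun y => gBS D δ (y, ξ y) b e) x))
      = (∑ h, pd i (fun y => pd j (fun z => ξ z h) y) x * gBS D δ (x, ξ x) (Sum.inr h) e)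
        + ∑ b, dxi ξ x j b * pd i (fun y => gBS D δ (y, ξ y) b e) x := by
    rw [Finset.sum_add_distrib]
    congr 1
    rw [Fintype.sum_sum_type]
    simp only [pd_pd_ximap_inl_zero ξ, zero_mul, Finset.sum_const_zero, zero_add]
    rfl
  rw [hsp] at hpm
  linarith [hpm]

theorem lowbeta (hξ : ∀ h, ContDiff ℝ (⊤ : ℕ∞) fun x => ξ x h)
    (hpar : ∀ x i h, nabla D ξ x i h = 0) (x : Fin n → ℝ) (i j : Fin n) (e : Idx n) :
    (∑ c, gBS D δ (x, ξ x) e c * betaM2TM D δ ξ x i j c)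
      = (1/2) * (∑ h, pd i (fun y => pd j (fun z => ξ z h) y) x *
            gBS D δ (x, ξ x) e (Sum.inr h))
        - (1/2) * (∑ h, pd j (fun y => pd i (fun z => ξ z h) y) x *
            gBS D δ (x, ξ x) e (Sum.inr h)) := by
  have hβ : ∀ c, betaM2TM D δ ξ x i j c
      = pd i (fun y => pd j (fun z => ximap ξ z c) y) x
        - (∑ m, Gamma D x i j m * dxi ξ x m c)
        + ∑ a, ∑ b, GammaT (gBS D δ) (x, ξ x) a b c * dxi ξ x i a * dxi ξ x j b :=
    fun c => rfl
  have hsplit : (∑ c, gBS D δ (x, ξ x) e c * betaM2TM D δ ξ x i j c)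
      = (∑ c, gBS D δ (x, ξ x) e c * pd i (fun y => pd j (fun z => ximap ξ z c) y) x)
        - (∑ c, gBS D δ (x, ξ x) e c * ∑ m, Gamma D x i j m * dxi ξ x m c)
        + (∑ c, gBS D δ (x, ξ x) e c * ∑ a, ∑ b, GammaT (gBS D δ) (x, ξ x) a b c *
            dxi ξ x i a * dxi ξ x j b) := by
    rw [← Finset.sum_sub_distrib, ← Finset.sum_add_distrib]
    refine Finset.sum_congr rfl fun c _ => ?_
    rw [hβ c]
    ring
  -- P1 term
  have hP1 : (∑ c, gBS D δ (x, ξ x) e c * pd i (fun y => pd j (fun z => ximap ξ z c) y) x)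
      = ∑ h, pd i (fun y => pd j (fun z => ξ z h) y) x * gBS D δ (x, ξ x) e (Sum.inr h) := by
    rw [Fintype.sum_sum_type]
    simp only [pd_pd_ximap_inl_zero ξ, mul_zero, Finset.sum_const_zero, zero_add]
    exact Finset.sum_congr rfl fun h _ => by rw [mul_comm]; rfl
  -- P2 term
  have hP2 : (∑ c, gBS D δ (x, ξ x) e c * ∑ m, Gamma D x i j m * dxi ξ x m c)
      = ∑ m, Gamma D x i j m * Sum.elim (fun h => D.g x m h) (fun _ => 0) e := by
    have h1 : ∀ c, gBS D δ (x, ξ x) e c * ∑ m, Gamma D x i j m * dxi ξ x m c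
        = ∑ m, Gamma D x i j m * (dxi ξ x m c * gBS D δ (x, ξ x) c e) := fun c => by
      rw [Finset.mul_sum]
      refine Finset.sum_congr rfl fun m _ => ?_
      rw [gBS_symm_apply D δ _ e c]
      ring
    simp only [h1]
    rw [Finset.sum_comm]
    refine Finset.sum_congr rfl fun m _ => ?_
    rw [← Finset.mul_sum, Q_eval' D δ ξ hpar x m e]
  -- CT term
  have hdd : ∀ (X Y Z : Idx n → Idx n → ℝ),
      (∑ a, ∑ b, (dxi ξ x i a * dxi ξ x j b) * ((1/2) * (X a b + Y a b - Z a b)))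
        = (1/2) * (∑ a, ∑ b, (dxi ξ x i a * dxi ξ x j b) * X a b)
          + (1/2) * (∑ a, ∑ b, (dxi ξ x i a * dxi ξ x j b) * Y a b)
          - (1/2) * (∑ a, ∑ b, (dxi ξ x i a * dxi ξ x j b) * Z a b) := by
    intro X Y Z
    rw [Finset.mul_sum, Finset.mul_sum, Finset.mul_sum, ← Finset.sum_add_distrib,
      ← Finset.sum_sub_distrib]
    refine Finset.sum_congr rfl fun a _ => ?_
    rw [Finset.mul_sum, Finset.mul_sum, Finset.mul_sum, ← Finset.sum_add_distrib,
      ← Finset.sum_sub_distrib]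
    exact Finset.sum_congr rfl fun b _ => by ring
  have hE1 : (∑ a, ∑ b, (dxi ξ x i a * dxi ξ x j b) *
        pdT a (fun q => gBS D δ q b e) (x, ξ x))
      = ∑ b, dxi ξ x j b * pd i (fun y => gBS D δ (y, ξ y) b e) x := by
    rw [Finset.sum_comm]
    refine Finset.sum_congr rfl fun b _ => ?_
    have h1 : ∀ a, (dxi ξ x i a * dxi ξ x j b) * pdT a (fun q => gBS D δ q b e) (x, ξ x)
        = dxi ξ x j b * (dxi ξ x i a * pdT a (fun q => gBS D δ q b e) (x, ξ x)) :=
      fun a => by ring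
    simp only [h1]
    rw [← Finset.mul_sum, chain_sum ξ hξ (sm_gBS D δ b e) x i]
  have hE2 : (∑ a, ∑ b, (dxi ξ x i a * dxi ξ x j b) *
        pdT b (fun q => gBS D δ q a e) (x, ξ x))
      = ∑ a, dxi ξ x i a * pd j (fun y => gBS D δ (y, ξ y) a e) x := by
    refine Finset.sum_congr rfl fun a _ => ?_
    have h1 : ∀ b, (dxi ξ x i a * dxi ξ x j b) * pdT b (fun q => gBS D δ q a e) (x, ξ x)
        = dxi ξ x i a * (dxi ξ x j b * pdT b (fun q => gBS D δ q a e) (x, ξ x)) :=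
      fun b => by ring
    simp only [h1]
    rw [← Finset.mul_sum, chain_sum ξ hξ (sm_gBS D δ a e) x j]
  have hE3 : (∑ a, ∑ b, (dxi ξ x i a * dxi ξ x j b) *
        pdT e (fun q => gBS D δ q a b) (x, ξ x))
      = pdT e (fun q => ∑ a, ∑ b, dxi ξ x i a * dxi ξ x j b * gBS D δ q a b) (x, ξ x) := by
    unfold pdT
    rw [dd_sum (F := fun a q => ∑ b, dxi ξ x i a * dxi ξ x j b * gBS D δ q a b) fun a _ => DifferentiableAt.fun_sum fun b _ =>
      (differentiableAt_const _).mul (cdiff (sm_gBS D δ a b) _)]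
    refine Finset.sum_congr rfl fun a _ => ?_
    rw [dd_sum (F := fun b q => dxi ξ x i a * dxi ξ x j b * gBS D δ q a b) fun b _ => (differentiableAt_const _).mul (cdiff (sm_gBS D δ a b) _)]
    refine Finset.sum_congr rfl fun b _ => ?_
    have := dd_const_mul (E := TMpt n) (f := fun q => gBS D δ q a b)
      (x := (x, ξ x)) (v := ebase e) (dxi ξ x i a * dxi ξ x j b) (cdiff (sm_gBS D δ a b) _)
    rw [show (fun q => dxi ξ x i a * dxi ξ x j b * gBS D δ q a b)
      = (fun q => (dxi ξ x i a * dxi ξ x j b) * gBS D δ q a b) from rfl]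
    rw [this]
  have hCT : (∑ c, gBS D δ (x, ξ x) e c * ∑ a, ∑ b, GammaT (gBS D δ) (x, ξ x) a b c *
        dxi ξ x i a * dxi ξ x j b)
      = (1/2) * (∑ b, dxi ξ x j b * pd i (fun y => gBS D δ (y, ξ y) b e) x)
        + (1/2) * (∑ a, dxi ξ x i a * pd j (fun y => gBS D δ (y, ξ y) a e) x)
        - (1/2) * pdT e (fun q => ∑ a, ∑ b, dxi ξ x i a * dxi ξ x j b * gBS D δ q a b)
            (x, ξ x) := by
    have h1 : ∀ c, gBS D δ (x, ξ x) e c * ∑ a, ∑ b, GammaT (gBS D δ) (x, ξ x) a b c *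
          dxi ξ x i a * dxi ξ x j b
        = ∑ a, ∑ b, (dxi ξ x i a * dxi ξ x j b) *
            (gBS D δ (x, ξ x) e c * GammaT (gBS D δ) (x, ξ x) a b c) := fun c => by
      rw [Finset.mul_sum]
      refine Finset.sum_congr rfl fun a _ => ?_
      rw [Finset.mul_sum]
      exact Finset.sum_congr rfl fun b _ => by ring
    simp only [h1]
    rw [Finset.sum_comm]
    have h2 : ∀ a, (∑ c, ∑ b, (dxi ξ x i a * dxi ξ x j b) *
          (gBS D δ (x, ξ x) e c * GammaT (gBS D δ) (x, ξ x) a b c))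
        = ∑ b, (dxi ξ x i a * dxi ξ x j b) *
            ((1/2) * (pdT a (fun q => gBS D δ q b e) (x, ξ x)
              + pdT b (fun q => gBS D δ q a e) (x, ξ x)
              - pdT e (fun q => gBS D δ q a b) (x, ξ x))) := by
      intro a
      rw [Finset.sum_comm]
      refine Finset.sum_congr rfl fun b _ => ?_
      rw [← Finset.mul_sum, GammaT_lowered D δ (x, ξ x) a b e]
    simp only [h2]
    rw [hdd, hE1, hE2, hE3]
  rw [hsplit, hP1, hP2, hCT, TA_eval D δ ξ hξ hpar x i j e, TA_eval D δ ξ hξ hpar x j i e,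
    T3_eval D δ ξ hpar x i j e]
  have hGsym : ∀ h, gBS D δ (x, ξ x) (Sum.inr h) e = gBS D δ (x, ξ x) e (Sum.inr h) :=
    fun h => gBS_symm_apply D δ (x, ξ x) (Sum.inr h) e
  simp only [hGsym]
  rcases e with h | h
  · simp only [Sum.elim_inl]
    linarith [Gamma_lower D x i j h]
  · simp only [Sum.elim_inr, mul_zero, Finset.sum_const_zero]
    ring

theorem minimal_of_parallel (hξ : ∀ h, ContDiff ℝ (⊤ : ℕ∞) fun x => ξ x h)
    (hpar : ∀ x i h, nabla D ξ x i h = 0) :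
    ∀ (x : Fin n → ℝ) (c : Idx n),
      (∑ i, ∑ j, (D.g x)⁻¹ i j * betaM2TM D δ ξ x i j c) = 0 := by
  intro x c
  set Mv : Idx n → ℝ := fun c' => ∑ i, ∑ j, (D.g x)⁻¹ i j * betaM2TM D δ ξ x i j c' with hMv
  have hvec : gBS D δ (x, ξ x) *ᵥ Mv = 0 := by
    funext e
    show (∑ c', gBS D δ (x, ξ x) e c' * Mv c') = 0
    have h1 : (∑ c', gBS D δ (x, ξ x) e c' * Mv c')
        = ∑ i, ∑ j, (D.g x)⁻¹ i j * (∑ c', gBS D δ (x, ξ x) e c' * betaM2TM D δ ξ x i j c') := by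
      rw [hMv]
      simp only [Finset.mul_sum]
      rw [Finset.sum_comm]
      refine Finset.sum_congr rfl fun i _ => ?_
      rw [Finset.sum_comm]
      refine Finset.sum_congr rfl fun j _ => Finset.sum_congr rfl fun c' _ => by ring
    rw [h1]
    have h2 : ∀ i j, (∑ c', gBS D δ (x, ξ x) e c' * betaM2TM D δ ξ x i j c')
        = (1/2) * (∑ h, pd i (fun y => pd j (fun z => ξ z h) y) x *
              gBS D δ (x, ξ x) e (Sum.inr h))
          - (1/2) * (∑ h, pd j (fun y => pd i (fun z => ξ z h) y) x *
              gBS D δ (x, ξ x) e (Sum.inr h)) := fun i j => lowbeta D δ ξ hξ hpar x i j e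
    simp only [h2]
    have h3 : (∑ i, ∑ j, (D.g x)⁻¹ i j *
        ((1/2) * (∑ h, pd i (fun y => pd j (fun z => ξ z h) y) x * gBS D δ (x, ξ x) e (Sum.inr h))
          - (1/2) * (∑ h, pd j (fun y => pd i (fun z => ξ z h) y) x *
              gBS D δ (x, ξ x) e (Sum.inr h))))
        = (∑ i, ∑ j, (D.g x)⁻¹ i j * ((1/2) * (∑ h, pd i (fun y => pd j (fun z => ξ z h) y) x *
              gBS D δ (x, ξ x) e (Sum.inr h))))
          - (∑ i, ∑ j, (D.g x)⁻¹ i j * ((1/2) * (∑ h, pd j (fun y => pd i (fun z => ξ z h) y) x *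
              gBS D δ (x, ξ x) e (Sum.inr h)))) := by
      rw [← Finset.sum_sub_distrib]
      refine Finset.sum_congr rfl fun i _ => ?_
      rw [← Finset.sum_sub_distrib]
      exact Finset.sum_congr rfl fun j _ => by ring
    rw [h3, trace_swap D x (fun i j => (1/2) * (∑ h, pd i (fun y => pd j (fun z => ξ z h) y) x *
      gBS D δ (x, ξ x) e (Sum.inr h)))]
    exact sub_self _
  have hzero : Mv = 0 := by
    have hchain : Mv = (gBS D δ (x, ξ x))⁻¹ *ᵥ (gBS D δ (x, ξ x) *ᵥ Mv) := by
      rw [Matrix.mulVec_mulVec, Matrix.nonsing_inv_mul _ (gBS_isUnit_det D δ (x, ξ x)),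
        Matrix.one_mulVec]
    rw [hvec, Matrix.mulVec_zero] at hchain
    exact hchain
  exact congrFun hzero c

end Chunk5c

/-- A vector field `ξ` on `M` is parallel (`∇ ξ = 0`) if and only if
the map `ξ : (M, g) → (TM, g_BS)` is a minimal isometric immersion (an isometric
immersion whose mean curvature — the trace of its second fundamental form — vanishes). -/
theorem xi_parallel_iff_minimal_isometricImmersion (k : ℕ) (D : PreData (2 * k))
    (hD : IsAntiParaKahler D) (δ : ℝ) (ξ : (Fin (2 * k) → ℝ) → Fin (2 * k) → ℝ)
    (hξ : ∀ h, ContDiff ℝ (⊤ : ℕ∞) fun x => ξ x h) :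
    (∀ (x : Fin (2 * k) → ℝ) (i h : Fin (2 * k)), nabla D ξ x i h = 0)
      ↔ (IsIsometricImmersion D δ ξ ∧
         ∀ (x : Fin (2 * k) → ℝ) (c : Idx (2 * k)),
           (∑ i, ∑ j, (D.g x)⁻¹ i j * betaM2TM D δ ξ x i j c) = 0) := by
  constructor
  · intro hpar
    exact ⟨iso_of_parallel D δ ξ hpar, minimal_of_parallel D δ ξ hξ hpar⟩
  · rintro ⟨hiso, -⟩
    exact parallel_of_iso D δ ξ hiso

end BergerSasaki
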